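/- The index Morse order on the nodes of a merge tree is a Morse order: for every subtree T' of T, the restriction of ≤_io to T' attains its maximum at the root of T', and attains its minimum within the subtree rooted at the left (respectively right) child of the root of T' when the root of T' has chirality L (respectively R). -/
import Mathlib


/-- Chirality: left or right. -/
inductive Chir : Type
  | L : Chir
  | R : Chir
  deriving DecidableEq

/-- The opposite chirality. -/
def Chir.other : Chir → Chir
  | .L => .R
  | .R => .L

/-- A merge tree: a full rooted chiral binary tree, encoded by the set of its nodes,
each node being the list of chiralities along the shortest path from the root to it
(the root is the empty list). -/
structure MergeTree : Type where
  nodes : Finset (List Chir)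
  root_mem : [] ∈ nodes
  prefix_closed : ∀ (w : List Chir) (x : Chir), w ++ [x] ∈ nodes → w ∈ nodes
  full : ∀ w : List Chir, w ++ [Chir.L] ∈ nodes ↔ w ++ [Chir.R] ∈ nodes

/-- An inner node: a node with (two) children. -/
def MergeTree.IsInner (T : MergeTree) (n : List Chir) : Prop :=
  n ∈ T.nodes ∧ n ++ [Chir.L] ∈ T.nodes

/-- A leaf node: a node without children. -/
def MergeTree.IsLeaf (T : MergeTree) (n : List Chir) : Prop :=
  n ∈ T.nodes ∧ n ++ [Chir.L] ∉ T.nodes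

/-- The chirality of a node (the root has chirality `L` by convention). -/
def chir (n : List Chir) : Chir := n.getLast?.getD Chir.L

/-- The number of inner nodes of a merge tree. -/
def MergeTree.innerCount (T : MergeTree) : ℕ :=
  (T.nodes.filter fun n => n ++ [Chir.L] ∈ T.nodes).card

/-- Auxiliary comparison of path words; the first argument is the letter at the last
position where the two words agreed (cf. "a_k = b_k"): under a common `L`, the letter
`L` precedes `R`; under a common `R`, `R` precedes `L`; shorter words are larger. -/
def leAux : Chir → List Chir → List Chir → Prop
  | _, _, [] => True
  | _, [], _ :: _ => False
  | last, x :: a, y :: b => if x = y then leAux x a b else x = last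

/-- The sublevel-connected Morse order (comparison of path words; every path word
starts with the letter `L` for the root). -/
def scLe (a b : List Chir) : Prop := leAux Chir.L a b

/-- The index Morse order: leaves below inner nodes; among leaves and among inner
nodes, compare path words. -/
def ioLe (T : MergeTree) (a b : List Chir) : Prop :=
  (T.IsLeaf a ∧ T.IsInner b) ∨
    (((T.IsLeaf a ∧ T.IsLeaf b) ∨ (T.IsInner a ∧ T.IsInner b)) ∧ scLe a b)

/-- The simplex order on the nodes of a merge tree. -/
def simpLe (a b : List Chir) : Prop :=
  a = b ∨ (b ++ [Chir.L]) <+: a ∨ (a ++ [Chir.R]) <+: b ∨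
    ∃ p : List Chir, (p ++ [Chir.L]) <+: a ∧ (p ++ [Chir.R]) <+: b

lemma leAux_refl : ∀ (last : Chir) (a : List Chir), leAux last a a
  | _, [] => trivial
  | last, x :: a => by simp only [leAux, if_pos rfl]; exact leAux_refl x a

lemma leAux_of_prefix : ∀ (p n : List Chir) (last : Chir), p <+: n → leAux last n p
  | [], n, last, _ => by cases n <;> trivial
  | x :: p, n, last, h => by
    obtain ⟨t, rfl⟩ := h
    show leAux last (x :: (p ++ t)) (x :: p)
    simp only [leAux, if_pos rfl]
    exact leAux_of_prefix p (p ++ t) x ⟨t, rfl⟩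

lemma leAux_append : ∀ (p : List Chir) (last : Chir) (a b : List Chir),
    leAux (p.getLast?.getD last) a b → leAux last (p ++ a) (p ++ b)
  | [], _, _, _, h => h
  | z :: q, last, a, b, h => by
    have hg : (z :: q).getLast?.getD last = q.getLast?.getD z := by
      cases q <;> rfl
    show leAux last (z :: (q ++ a)) (z :: (q ++ b))
    simp only [leAux, if_pos rfl]
    exact leAux_append q z a b (hg ▸ h)

lemma leAux_replicate : ∀ (k : ℕ) (c : Chir) (n : List Chir),
    (∀ x : Chir, ¬ (List.replicate k c ++ [x]) <+: n) → leAux c (List.replicate k c) n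
  | 0, c, [], _ => trivial
  | 0, c, y :: t, h => absurd ⟨t, rfl⟩ (h y)
  | k + 1, c, [], _ => trivial
  | k + 1, c, y :: t, h => by
    rw [List.replicate_succ]
    show leAux c (c :: List.replicate k c) (y :: t)
    by_cases hy : c = y
    · subst hy
      simp only [leAux, if_pos rfl]
      refine leAux_replicate k c t (fun x hx => h x ?_)
      obtain ⟨r, hr⟩ := hx
      exact ⟨r, by rw [List.replicate_succ]; simp [← hr]⟩
    · simp only [leAux, if_neg hy]

lemma mem_of_prefix (T : MergeTree) : ∀ n ∈ T.nodes, ∀ w, w <+: n → w ∈ T.nodes := by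
  intro n
  induction n using List.reverseRecOn with
  | nil => intro h w hw; rw [List.prefix_nil.mp hw]; exact h
  | append_singleton m x ih =>
    intro h w hw
    rcases List.prefix_concat_iff.mp hw with rfl | hw'
    · exact h
    · exact ih (T.prefix_closed m x h) w hw'

lemma leaf_or_inner (T : MergeTree) {n : List Chir} (h : n ∈ T.nodes) :
    T.IsLeaf n ∨ T.IsInner n := by
  by_cases hL : n ++ [Chir.L] ∈ T.nodes
  · exact Or.inr ⟨h, hL⟩
  · exact Or.inl ⟨h, hL⟩

lemma mem_append_single (T : MergeTree) {n : List Chir} (c : Chir)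
    (h : n ++ [Chir.L] ∈ T.nodes) : n ++ [c] ∈ T.nodes := by
  cases c
  · exact h
  · exact (T.full n).mp h

theorem stmt5' (T : MergeTree) :
    (∀ p ∈ T.nodes, ∀ n ∈ T.nodes, p <+: n → ioLe T n p) ∧
    (∀ p : List Chir, T.IsInner p → ∃ m ∈ T.nodes, (p ++ [chir p]) <+: m ∧
        ∀ n ∈ T.nodes, p <+: n → ioLe T m n) := by
  constructor
  · intro p hp n hn hpn
    by_cases hep : p = n
    · subst hep
      rcases leaf_or_inner T hp with hl | hi
      · exact Or.inr ⟨Or.inl ⟨hl, hl⟩, leAux_refl _ _⟩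
      · exact Or.inr ⟨Or.inr ⟨hi, hi⟩, leAux_refl _ _⟩
    · obtain ⟨t, rfl⟩ := hpn
      cases t with
      | nil => simp at hep
      | cons x t' =>
        have hpx : p ++ [x] ∈ T.nodes :=
          mem_of_prefix T _ hn (p ++ [x]) ⟨t', by simp⟩
        have hpi : T.IsInner p := by
          refine ⟨hp, ?_⟩
          cases x
          · exact hpx
          · exact (T.full p).mpr hpx
        rcases leaf_or_inner T hn with hl | hi
        · exact Or.inl ⟨hl, hpi⟩
        · exact Or.inr ⟨Or.inr ⟨hi, hpi⟩, leAux_of_prefix _ _ _ ⟨x :: t', rfl⟩⟩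
  · intro p hpi
    set c := chir p with hc
    have hpc : p ++ [c] ∈ T.nodes := mem_append_single T c hpi.2
    have hex : ∃ k, p ++ List.replicate k c ∉ T.nodes := by
      refine ⟨(T.nodes.sup List.length) + 1, fun hmem => ?_⟩
      have hlen := Finset.le_sup (f := List.length) hmem
      rw [List.length_append, List.length_replicate] at hlen
      omega
    set j := Nat.find hex with hj
    have hjspec : p ++ List.replicate j c ∉ T.nodes := Nat.find_spec hex
    have hj2 : 2 ≤ j := by
      rcases Nat.lt_or_ge j 2 with h | h
      · interval_cases j
        · exact absurd (by simpa using hpi.1) hjspec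
        · exact absurd (by simpa using hpc) hjspec
      · exact h
    set k := j - 1 with hk
    have hk1 : 1 ≤ k := by omega
    have hkj : k + 1 = j := by omega
    have hmmem : p ++ List.replicate k c ∈ T.nodes := by
      have := Nat.find_min hex (m := k) (by omega)
      simpa using this
    set m := p ++ List.replicate k c with hm
    have hmsucc : m ++ [c] ∉ T.nodes := by
      rw [hm, List.append_assoc, ← List.replicate_succ', hkj]
      exact hjspec
    have hmleaf : T.IsLeaf m := by
      refine ⟨hmmem, fun hL => ?_⟩
      exact hmsucc (mem_append_single T c hL)
    refine ⟨m, hmmem, ?_, ?_⟩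
    · refine ⟨List.replicate (k - 1) c, ?_⟩
      have hrep : List.replicate k c = [c] ++ List.replicate (k - 1) c := by
        rw [show k = (k - 1) + 1 from by omega, List.replicate_succ]; rfl
      rw [hm, hrep, ← List.append_assoc]
    · intro n hn hpn
      rcases leaf_or_inner T hn with hnl | hni
      · obtain ⟨t, rfl⟩ := hpn
        refine Or.inr ⟨Or.inl ⟨hmleaf, hnl⟩, ?_⟩
        show leAux Chir.L (p ++ List.replicate k c) (p ++ t)
        refine leAux_append p Chir.L _ _ ?_
        have hcc : p.getLast?.getD Chir.L = c := rfl
        rw [hcc]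
        refine leAux_replicate k c t (fun x hx => ?_)
        have : m ++ [x] ∈ T.nodes := by
          refine mem_of_prefix T _ hnl.1 _ ?_
          obtain ⟨r, hr⟩ := hx
          exact ⟨r, by subst hr; simp [hm]⟩
        cases x
        · exact hmleaf.2 this
        · exact hmleaf.2 ((T.full m).mpr this)
      · exact Or.inl ⟨hmleaf, hni⟩


/-- The index Morse order is a Morse order: on every subtree (the set of nodes with a
given prefix `p`) it attains its maximum at the root `p` of the subtree, and its
minimum inside the subtree rooted at the child of `p` of the same chirality as `p`. -/
theorem stmt5 (T : MergeTree) :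
    (∀ p ∈ T.nodes, ∀ n ∈ T.nodes, p <+: n → ioLe T n p) ∧
    (∀ p : List Chir, T.IsInner p → ∃ m ∈ T.nodes, (p ++ [chir p]) <+: m ∧
        ∀ n ∈ T.nodes, p <+: n → ioLe T m n) := by
  exact stmt5' T
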